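/- In the randomly oriented complete binary tree T_n of height n with parameter p ∈ [0,1], the expected size of the downwards percolation cluster (leaves excluded) is E[|C↓_n|] = Σ_{k=1}^n 2^{n−k}·ρ_k(p). -/

import Mathlib

open MeasureTheory ProbabilityTheory Finset
open scoped Classical

/-- Vertices of the complete binary tree of height `n`: words over `{0,1}`
of length at most `n`.  The empty word is the root; words of length `n`
are the leaves; the level of `v` is `n - |v|`. -/
def Vtx (n : ℕ) : Type := {l : List Bool // l.length ≤ n}

/-- Edges of the complete binary tree of height `n`, indexed by the nonempty
words of length at most `n`: the edge joins such a word to its predecessor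
(the word obtained by deleting the last letter). -/
def Edg (n : ℕ) : Type := {l : List Bool // l ≠ [] ∧ l.length ≤ n}

noncomputable instance (n : ℕ) : Fintype (Vtx n) := by
  apply Fintype.ofInjective (fun v : Vtx n => fun i : Fin (n + 1) => v.1[i.1]?)
  intro u v h
  apply Subtype.ext
  apply List.ext_getElem?
  intro m
  by_cases hm : m < n + 1
  · exact congrFun h ⟨m, hm⟩
  · have hu := u.2
    have hv := v.2
    rw [List.getElem?_eq_none, List.getElem?_eq_none] <;> omega

noncomputable instance (n : ℕ) : Fintype (Edg n) := by
  apply Fintype.ofInjective (fun v : Edg n => fun i : Fin (n + 1) => v.1[i.1]?)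
  intro u v h
  apply Subtype.ext
  apply List.ext_getElem?
  intro m
  by_cases hm : m < n + 1
  · exact congrFun h ⟨m, hm⟩
  · have hu := u.2.2
    have hv := v.2.2
    rw [List.getElem?_eq_none, List.getElem?_eq_none] <;> omega

/-- The Bernoulli measure on `Bool`: `true` has probability `p`,
`false` has probability `1 - p`. -/
noncomputable def bern (p : ℝ) : Measure Bool :=
  (ENNReal.ofReal p) • Measure.dirac true + (ENNReal.ofReal (1 - p)) • Measure.dirac false

instance (p : ℝ) : IsFiniteMeasure (bern p) := by
  constructor
  simp only [bern, Measure.add_apply, Measure.smul_apply, smul_eq_mul]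
  exact ENNReal.add_lt_top.mpr
    ⟨ENNReal.mul_lt_top ENNReal.ofReal_lt_top (by simp),
     ENNReal.mul_lt_top ENNReal.ofReal_lt_top (by simp)⟩

/-- The random orientation measure on the complete binary tree of height `n`:
each edge is oriented towards the root (coordinate `true`) with probability `p`,
independently of the other edges. -/
noncomputable def treeMeasure (n : ℕ) (p : ℝ) : Measure (Edg n → Bool) :=
  Measure.pi fun _ => bern p

/-- One oriented step in the configuration `ω`: `a → b` if the tree edge between
`a` and `b` is oriented from `a` to `b` (coordinate `true` means oriented towards
the root, i.e. towards the shorter word). -/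
def TStep {n : ℕ} (ω : Edg n → Bool) (a b : Vtx n) : Prop :=
  ∃ e : Edg n, (ω e = true ∧ e.1 = a.1 ∧ b.1 = e.1.dropLast) ∨
    (ω e = false ∧ e.1 = b.1 ∧ a.1 = e.1.dropLast)

/-- `X v`: the event that water, pumped into the leaves, reaches `v`, i.e. there is
a directed path from some leaf to `v`. -/
def Xwet {n : ℕ} (v : Vtx n) : Set (Edg n → Bool) :=
  {ω | ∃ w : Vtx n, w.1.length = n ∧ Relation.ReflTransGen (TStep ω) w v}

/-- `Y v`: the event that `v` gets wet in downwards percolation: there is a leaf `w`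
above `v` such that every edge on the path from `w` down to `v` is oriented
towards the root. -/
def Ydown {n : ℕ} (v : Vtx n) : Set (Edg n → Bool) :=
  {ω | ∃ w : List Bool, w.length = n ∧ v.1 <+: w ∧
    ∀ u : Edg n, u.1 <+: w → v.1.length < u.1.length → ω u = true}

/-- The recursion `ρ₀ = 1`, `ρ_{k+1} = 2 p ρ_k - (p ρ_k)²`. -/
noncomputable def rho (p : ℝ) : ℕ → ℝ
  | 0 => 1
  | k + 1 => 2 * p * rho p k - (p * rho p k) ^ 2

/-- `α^{(n)}_k`, the probability that water reaches a level-`k` vertex from below. -/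
noncomputable def alpha (p : ℝ) (n k : ℕ) : ℝ :=
  (1 - p) * p * ∑ i ∈ Finset.range (n - k),
    (1 - p) ^ i * rho p (k + i) * ∏ j ∈ Finset.range i, (1 - p * rho p (k + j))

/-- The size of the percolation cluster `C_n` (leaves excluded). -/
noncomputable def clusterSize (n : ℕ) (ω : Edg n → Bool) : ℕ :=
  Nat.card {v : Vtx n // v.1.length < n ∧ ω ∈ Xwet v}

/-- The size of the downwards percolation cluster `C↓_n` (leaves excluded). -/
noncomputable def downClusterSize (n : ℕ) (ω : Edg n → Bool) : ℕ :=
  Nat.card {v : Vtx n // v.1.length < n ∧ ω ∈ Ydown v}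

/-- The maximum level reached by water in downwards percolation. -/
noncomputable def maxLevel (n : ℕ) (ω : Edg n → Bool) : ℕ :=
  sSup ({0} ∪ {k | ∃ v : Vtx n, ω ∈ Ydown v ∧ n - v.1.length = k})

/-- The root of the tree. -/
def root (n : ℕ) : Vtx n := ⟨[], by simp⟩

open scoped ENNReal

lemma measurableSet_all {ι : Type*} [Finite ι] (s : Set (ι → Bool)) : MeasurableSet s := by
  have hsing : ∀ f : ι → Bool, MeasurableSet ({f} : Set (ι → Bool)) := by
    intro f
    have h : ({f} : Set (ι → Bool)) = ⋂ i, (fun ω : ι → Bool => ω i) ⁻¹' {f i} := by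
      ext g; simp [funext_iff, eq_comm]
    rw [h]
    exact MeasurableSet.iInter fun i => measurable_pi_apply i (measurableSet_singleton _)
  have h : s = ⋃ f ∈ s, {f} := by simp
  rw [h]
  exact MeasurableSet.biUnion (Set.to_countable _) fun f _ => hsing f

lemma bern_true {p : ℝ} : bern p {true} = ENNReal.ofReal p := by
  simp [bern]

lemma bern_prob {p : ℝ} (hp0 : 0 ≤ p) (hp1 : p ≤ 1) : IsProbabilityMeasure (bern p) := by
  constructor
  simp only [bern, Measure.add_apply, Measure.smul_apply, smul_eq_mul,
    Measure.dirac_apply' _ MeasurableSet.univ, Set.mem_univ, Set.indicator_of_mem,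
    Pi.one_apply, mul_one]
  rw [← ENNReal.ofReal_add hp0 (by linarith), ← ENNReal.ofReal_one]
  norm_num

/-- `A` depends only on the coordinates in `S`. -/
def DepOn {ι : Type*} (A : Set (ι → Bool)) (S : Set ι) : Prop :=
  ∀ ω ω' : ι → Bool, (∀ e ∈ S, ω e = ω' e) → (ω ∈ A ↔ ω' ∈ A)

lemma DepOn.mono {ι : Type*} {A : Set (ι → Bool)} {S T : Set ι} (h : DepOn A S)
    (hST : S ⊆ T) : DepOn A T :=
  fun ω ω' hag => h ω ω' (fun e he => hag e (hST he))

lemma DepOn.compl {ι : Type*} {A : Set (ι → Bool)} {S : Set ι} (h : DepOn A S) :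
    DepOn Aᶜ S :=
  fun ω ω' hag => not_congr (h ω ω' hag)

lemma indep_of_depOn {ι : Type*} [Fintype ι] (μ : Measure Bool) [IsProbabilityMeasure μ]
    {A B : Set (ι → Bool)} {S : Set ι} (hA : DepOn A S) (hB : DepOn B Sᶜ) :
    Measure.pi (fun _ : ι => μ) (A ∩ B) =
      Measure.pi (fun _ : ι => μ) A * Measure.pi (fun _ : ι => μ) B := by
  classical
  set e := MeasurableEquiv.piEquivPiSubtypeProd (fun _ : ι => Bool) (· ∈ S) with he
  have hmp := measurePreserving_piEquivPiSubtypeProd (fun _ : ι => μ) (· ∈ S)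
  set A₁ : Set ({ i // i ∈ S } → Bool) := (fun (ω : ι → Bool) (i : {i // i ∈ S}) => ω i.1) '' A with hA₁
  set B₂ : Set ({ i // ¬ i ∈ S } → Bool) := (fun (ω : ι → Bool) (i : {i // ¬ i ∈ S}) => ω i.1) '' B with hB₂
  have hAmem : ∀ ω : ι → Bool, ω ∈ A ↔ (fun i : {i // i ∈ S} => ω i.1) ∈ A₁ := by
    intro ω
    constructor
    · intro h; exact ⟨ω, h, rfl⟩
    · rintro ⟨ω', hω', hres⟩
      exact (hA ω' ω (fun i hi => congrFun hres ⟨i, hi⟩)).mp hω'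
  have hBmem : ∀ ω : ι → Bool, ω ∈ B ↔ (fun i : {i // ¬ i ∈ S} => ω i.1) ∈ B₂ := by
    intro ω
    constructor
    · intro h; exact ⟨ω, h, rfl⟩
    · rintro ⟨ω', hω', hres⟩
      exact (hB ω' ω (fun i hi => congrFun hres ⟨i, hi⟩)).mp hω'
  have h1 : ∀ ω : ι → Bool, (e ω).1 = fun i : {i // i ∈ S} => ω i.1 := fun _ => rfl
  have h2 : ∀ ω : ι → Bool, (e ω).2 = fun i : {i // ¬ i ∈ S} => ω i.1 := fun _ => rfl
  have hApre : A = e ⁻¹' (A₁ ×ˢ Set.univ) := by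
    ext ω; simp [Set.mem_prod, h1 ω, ← hAmem ω]
  have hBpre : B = e ⁻¹' (Set.univ ×ˢ B₂) := by
    ext ω; simp [Set.mem_prod, h2 ω, ← hBmem ω]
  have hABpre : A ∩ B = e ⁻¹' (A₁ ×ˢ B₂) := by
    rw [hApre, hBpre, ← Set.preimage_inter, Set.prod_inter_prod, Set.univ_inter, Set.inter_univ]
  have hmA₁ : MeasurableSet A₁ := measurableSet_all _
  have hmB₂ : MeasurableSet B₂ := measurableSet_all _
  rw [hABpre, hApre, hBpre,
    hmp.measure_preimage (hmA₁.prod hmB₂).nullMeasurableSet,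
    hmp.measure_preimage (hmA₁.prod MeasurableSet.univ).nullMeasurableSet,
    hmp.measure_preimage (MeasurableSet.univ.prod hmB₂).nullMeasurableSet,
    Measure.prod_prod, Measure.prod_prod, Measure.prod_prod, measure_univ, measure_univ,
    mul_one, one_mul]

lemma treeMeasure_prob {n : ℕ} {p : ℝ} (hp0 : 0 ≤ p) (hp1 : p ≤ 1) :
    IsProbabilityMeasure (treeMeasure n p) := by
  haveI := bern_prob hp0 hp1
  unfold treeMeasure
  infer_instance

lemma treeMeasure_indep {n : ℕ} {p : ℝ} (hp0 : 0 ≤ p) (hp1 : p ≤ 1)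
    {A B : Set (Edg n → Bool)} {S : Set (Edg n)} (hA : DepOn A S) (hB : DepOn B Sᶜ) :
    treeMeasure n p (A ∩ B) = treeMeasure n p A * treeMeasure n p B := by
  haveI := bern_prob hp0 hp1
  exact indep_of_depOn _ hA hB

lemma treeMeasure_coord {n : ℕ} {p : ℝ} (hp0 : 0 ≤ p) (hp1 : p ≤ 1) (e₀ : Edg n) :
    treeMeasure n p {ω | ω e₀ = true} = ENNReal.ofReal p := by
  haveI := bern_prob hp0 hp1
  have h : {ω : Edg n → Bool | ω e₀ = true}
      = Set.pi Set.univ (fun e => if e = e₀ then {true} else Set.univ) := by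
    ext ω
    simp only [Set.mem_setOf_eq, Set.mem_pi, Set.mem_univ, forall_true_left]
    constructor
    · intro h e
      split_ifs with h'
      · simp [h', h]
      · trivial
    · intro h
      have := h e₀
      simpa using this
  rw [h, treeMeasure, Measure.pi_pi]
  have h2 : ∀ e : Edg n, bern p (if e = e₀ then {true} else Set.univ)
      = if e = e₀ then ENNReal.ofReal p else 1 := by
    intro e; split_ifs
    · exact bern_true
    · exact measure_univ
  simp_rw [h2]
  simp

lemma rho_nonneg_le_one {p : ℝ} (hp0 : 0 ≤ p) (hp1 : p ≤ 1) :
    ∀ k, 0 ≤ rho p k ∧ rho p k ≤ 1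
  | 0 => by norm_num [rho]
  | (k+1) => by
    obtain ⟨h0, h1⟩ := rho_nonneg_le_one hp0 hp1 k
    have hx0 : 0 ≤ p * rho p k := mul_nonneg hp0 h0
    have hx1 : p * rho p k ≤ 1 := by nlinarith
    constructor
    · show 0 ≤ 2 * p * rho p k - (p * rho p k) ^ 2
      nlinarith
    · show 2 * p * rho p k - (p * rho p k) ^ 2 ≤ 1
      nlinarith

/-- The child edge of a non-leaf vertex. -/
def childE {n : ℕ} (v : Vtx n) (h : v.1.length < n) (b : Bool) : Edg n :=
  ⟨v.1 ++ [b], by simp, by simp; omega⟩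

/-- The child vertex of a non-leaf vertex. -/
def childV {n : ℕ} (v : Vtx n) (h : v.1.length < n) (b : Bool) : Vtx n :=
  ⟨v.1 ++ [b], by simp; omega⟩

lemma Ydown_leaf {n : ℕ} (v : Vtx n) (h : v.1.length = n) : Ydown v = Set.univ := by
  ext ω
  simp only [Ydown, Set.mem_setOf_eq, Set.mem_univ, iff_true]
  exact ⟨v.1, h, List.prefix_refl _, fun u hu hlen => absurd hlen (by have := u.2.2; omega)⟩

lemma Ydown_dep {n : ℕ} (v : Vtx n) :
    DepOn (Ydown v) {e : Edg n | v.1 <+: e.1 ∧ v.1.length < e.1.length} := by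
  have key : ∀ ω ω' : Edg n → Bool,
      (∀ e ∈ {e : Edg n | v.1 <+: e.1 ∧ v.1.length < e.1.length}, ω e = ω' e) →
      ω ∈ Ydown v → ω' ∈ Ydown v := by
    rintro ω ω' hag ⟨w, h1, h2, h3⟩
    refine ⟨w, h1, h2, fun u hu hlen => ?_⟩
    rw [← hag u ⟨List.prefix_of_prefix_length_le h2 hu (le_of_lt hlen), hlen⟩]
    exact h3 u hu hlen
  intro ω ω' hag
  exact ⟨key ω ω' hag, key ω' ω fun e he => (hag e he).symm⟩

lemma measure_Ydown {n : ℕ} {p : ℝ} (hp0 : 0 ≤ p) (hp1 : p ≤ 1) :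
    ∀ (k : ℕ) (v : Vtx n), n - v.1.length = k →
      treeMeasure n p (Ydown v) = ENNReal.ofReal (rho p k) := by
  haveI := treeMeasure_prob (n := n) hp0 hp1
  intro k
  induction k with
  | zero =>
    intro v hv
    have hlen : v.1.length = n := by have := v.2; omega
    rw [Ydown_leaf v hlen]
    simp [rho]
  | succ k ih =>
    intro v hv
    have hmn : v.1.length < n := by omega
    set m := v.1.length with hm
    -- children
    set A : Bool → Set (Edg n → Bool) :=
      fun b => {ω | ω (childE v hmn b) = true} ∩ Ydown (childV v hmn b) with hA
    have hclen : ∀ b, (childV v hmn b).1.length = m + 1 := by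
      intro b; simp [childV, hm]
    have hcElen : ∀ b, (childE v hmn b).1.length = m + 1 := by
      intro b; simp [childE, hm]
    have hcval : ∀ b, (childV v hmn b).1 = v.1 ++ [b] := fun _ => rfl
    have hcEval : ∀ b, (childE v hmn b).1 = v.1 ++ [b] := fun _ => rfl
    -- splitting
    have hsplit : Ydown v = A false ∪ A true := by
      ext ω
      simp only [Set.mem_union]
      have key : ∀ b : Bool, ω ∈ A b → ω ∈ Ydown v := by
        rintro b ⟨hedge, w, hwlen, hwpre, hall⟩
        rw [hcval b] at hwpre
        have hstep : v.1 <+: v.1 ++ [b] := List.prefix_append _ _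
        refine ⟨w, hwlen, hstep.trans hwpre, fun u hu hlen => ?_⟩
        by_cases hcase : m + 1 < u.1.length
        · exact hall u hu (by rw [hclen b]; exact hcase)
        · have hlen' : u.1.length = m + 1 := by omega
          have h2 : u.1 <+: v.1 ++ [b] :=
            List.prefix_of_prefix_length_le hu hwpre (by simp [hlen', hm])
          have h3 : u.1 = v.1 ++ [b] :=
            List.IsPrefix.eq_of_length h2 (by simp [hlen', hm])
          have h4 : u = childE v hmn b := Subtype.ext h3
          rw [h4]; exact hedge
      constructor
      · rintro ⟨w, hwlen, hwpre, hall⟩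
        have hmw : m < w.length := by omega
        have h1 : v.1 = w.take m := by
          have h := List.prefix_iff_eq_take.mp hwpre; rwa [← hm] at h
        set b := w.get ⟨m, hmw⟩ with hb
        have h2 : v.1 ++ [b] = w.take (m+1) := by
          rw [h1, hb, List.get_eq_getElem]
          exact List.take_concat_get' w m hmw
        have hpre' : v.1 ++ [b] <+: w := by rw [h2]; exact List.take_prefix _ _
        have hmem : ω ∈ A b := by
          refine ⟨hall (childE v hmn b) (by rw [hcEval b]; exact hpre') (by rw [hcElen b]; omega),
            w, hwlen, by rw [hcval b]; exact hpre', fun u hu hlen => ?_⟩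
          refine hall u hu ?_
          rw [hclen b] at hlen; omega
        have hball : ∀ b', ω ∈ A b' → ω ∈ A false ∨ ω ∈ A true := by
          intro b' h'
          cases b'
          · exact Or.inl h'
          · exact Or.inr h'
        exact hball b hmem
      · rintro (h | h)
        exacts [key false h, key true h]
    -- measure of each A b
    have hcdep : ∀ b, DepOn (Ydown (childV v hmn b))
        {e : Edg n | v.1 ++ [b] <+: e.1 ∧ m + 1 < e.1.length} := by
      intro b
      have hset : {e : Edg n | v.1 ++ [b] <+: e.1 ∧ m + 1 < e.1.length}
          = {e : Edg n | (childV v hmn b).1 <+: e.1 ∧ (childV v hmn b).1.length < e.1.length} := by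
        ext e
        rw [Set.mem_setOf_eq, Set.mem_setOf_eq, hclen b, hcval b]
      rw [hset]
      exact Ydown_dep _
    obtain ⟨hr0, hr1⟩ := rho_nonneg_le_one hp0 hp1 k
    have hx0 : 0 ≤ p * rho p k := mul_nonneg hp0 hr0
    have hx1 : p * rho p k ≤ 1 := by nlinarith
    have hEdep : ∀ b, DepOn {ω : Edg n → Bool | ω (childE v hmn b) = true}
        ({childE v hmn b} : Set (Edg n)) := by
      intro b ω ω' hag
      rw [Set.mem_setOf_eq, Set.mem_setOf_eq, hag (childE v hmn b) (Set.mem_singleton _)]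
    have hmeasA : ∀ b, treeMeasure n p (A b) = ENNReal.ofReal (p * rho p k) := by
      intro b
      have hsub : {e : Edg n | v.1 ++ [b] <+: e.1 ∧ m + 1 < e.1.length}
          ⊆ ({childE v hmn b} : Set (Edg n))ᶜ := by
        intro e he hmem
        rw [Set.mem_singleton_iff] at hmem
        rw [hmem] at he
        have h2 := he.2
        rw [hcElen b] at h2
        omega
      show treeMeasure n p ({ω | ω (childE v hmn b) = true} ∩ Ydown (childV v hmn b)) = _
      rw [treeMeasure_indep hp0 hp1 (hEdep b) ((hcdep b).mono hsub),
        treeMeasure_coord hp0 hp1, ih (childV v hmn b) (by rw [hclen b]; omega),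
        ← ENNReal.ofReal_mul hp0]
    have hAc : ∀ b, treeMeasure n p (A b)ᶜ = ENNReal.ofReal (1 - p * rho p k) := by
      intro b
      rw [measure_compl (measurableSet_all _) (measure_ne_top _ _), measure_univ, hmeasA b,
        ← ENNReal.ofReal_one, ← ENNReal.ofReal_sub _ hx0]
    have hAdep : ∀ b, DepOn (A b) {e : Edg n | v.1 ++ [b] <+: e.1} := by
      intro b
      have hY : DepOn (Ydown (childV v hmn b)) {e : Edg n | v.1 ++ [b] <+: e.1} :=
        (hcdep b).mono fun e he => he.1
      have hsub2 : ({childE v hmn b} : Set (Edg n)) ⊆ {e : Edg n | v.1 ++ [b] <+: e.1} := by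
        intro e he
        rw [Set.mem_singleton_iff] at he
        subst he
        show v.1 ++ [b] <+: (childE v hmn b).1
        rw [hcEval b]
      have hE : DepOn {ω : Edg n → Bool | ω (childE v hmn b) = true}
          {e : Edg n | v.1 ++ [b] <+: e.1} := (hEdep b).mono hsub2
      intro ω ω' hag
      show ω ∈ _ ∩ _ ↔ ω' ∈ _ ∩ _
      rw [Set.mem_inter_iff, Set.mem_inter_iff]
      exact and_congr (hE ω ω' hag) (hY ω ω' hag)
    have hdisj : {e : Edg n | v.1 ++ [true] <+: e.1}
        ⊆ {e : Edg n | v.1 ++ [false] <+: e.1}ᶜ := by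
      intro e h1 h2
      have h3 : (v.1 ++ [true] : List Bool).length ≤ (v.1 ++ [false] : List Bool).length := by
        simp
      have h4 := List.prefix_of_prefix_length_le h1 h2 h3
      have h5 := List.IsPrefix.eq_of_length h4 (by simp)
      have h6 := List.append_cancel_left h5
      simp at h6
    calc treeMeasure n p (Ydown v)
        = treeMeasure n p ((A false ∪ A true)ᶜ)ᶜ := by rw [hsplit, compl_compl]
      _ = 1 - treeMeasure n p ((A false ∪ A true)ᶜ) :=
          prob_compl_eq_one_sub (measurableSet_all _)
      _ = 1 - ENNReal.ofReal ((1 - p * rho p k) * (1 - p * rho p k)) := by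
          rw [Set.compl_union,
            treeMeasure_indep hp0 hp1 ((hAdep false).compl) (((hAdep true).compl).mono hdisj),
            hAc false, hAc true, ← ENNReal.ofReal_mul (by linarith)]
      _ = ENNReal.ofReal (rho p (k + 1)) := by
          rw [← ENNReal.ofReal_one, ← ENNReal.ofReal_sub _ (by nlinarith)]
          congr 1
          simp only [rho]
          ring

/-- Vertices of length `m` biject with boolean vectors of length `m`. -/
def lenEquiv (n m : ℕ) (hm : m ≤ n) :
    {v : Vtx n // v.1.length = m} ≃ List.Vector Bool m where
  toFun v := ⟨v.1.1, v.2⟩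
  invFun l := ⟨⟨l.1, by rw [l.2]; exact hm⟩, l.2⟩
  left_inv v := rfl
  right_inv l := rfl

lemma card_len (n m : ℕ) (hm : m ≤ n) :
    (Finset.univ.filter (fun v : Vtx n => v.1.length = m)).card = 2 ^ m := by
  rw [← Fintype.card_subtype, Fintype.card_congr (lenEquiv n m hm), card_vector]
  simp

/-- **Expected size of the downwards percolation cluster.**
`E[|C↓_n|] = ∑_{k=1}^n 2^{n-k} ρ_k`. -/
theorem expected_downClusterSize (n : ℕ) (p : ℝ) (hp0 : 0 ≤ p) (hp1 : p ≤ 1) :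
    ∫ ω, (downClusterSize n ω : ℝ) ∂(treeMeasure n p) =
      ∑ k ∈ Finset.Icc 1 n, (2 : ℝ) ^ (n - k) * rho p k := by
  haveI := treeMeasure_prob (n := n) hp0 hp1
  have hpt : ∀ ω : Edg n → Bool, (downClusterSize n ω : ℝ) =
      ∑ v : Vtx n, Set.indicator {ω' : Edg n → Bool | v.1.length < n ∧ ω' ∈ Ydown v}
        (fun _ => (1 : ℝ)) ω := by
    intro ω
    rw [downClusterSize, Nat.card_eq_fintype_card, Fintype.card_subtype, Finset.card_filter]
    push_cast
    refine Finset.sum_congr rfl fun v _ => ?_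
    by_cases h : v.1.length < n ∧ ω ∈ Ydown v
    · rw [if_pos h]
      exact (Set.indicator_of_mem h (fun _ => (1 : ℝ))).symm
    · rw [if_neg h]
      exact (Set.indicator_of_notMem h (fun _ => (1 : ℝ))).symm
  calc ∫ ω, (downClusterSize n ω : ℝ) ∂(treeMeasure n p)
      = ∫ ω, ∑ v : Vtx n, Set.indicator {ω' : Edg n → Bool | v.1.length < n ∧ ω' ∈ Ydown v}
          (fun _ => (1 : ℝ)) ω ∂(treeMeasure n p) := by
        exact integral_congr_ae (Filter.Eventually.of_forall hpt)
    _ = ∑ v : Vtx n, ∫ ω, Set.indicator {ω' : Edg n → Bool | v.1.length < n ∧ ω' ∈ Ydown v}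
          (fun _ => (1 : ℝ)) ω ∂(treeMeasure n p) :=
        integral_finset_sum _ fun v _ =>
          (integrable_const (1 : ℝ)).indicator (measurableSet_all _)
    _ = ∑ v : Vtx n, if v.1.length < n then rho p (n - v.1.length) else 0 := by
        refine Finset.sum_congr rfl fun v _ => ?_
        have hind : ∫ ω, Set.indicator {ω' : Edg n → Bool | v.1.length < n ∧ ω' ∈ Ydown v}
            (fun _ => (1 : ℝ)) ω ∂(treeMeasure n p)
            = (treeMeasure n p {ω' : Edg n → Bool | v.1.length < n ∧ ω' ∈ Ydown v}).toReal :=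
          integral_indicator_one (measurableSet_all _)
        rw [hind]
        by_cases h : v.1.length < n
        · rw [if_pos h]
          have hset : {ω' : Edg n → Bool | v.1.length < n ∧ ω' ∈ Ydown v} = Ydown v := by
            ext ω'; simp [h]
          rw [hset, measure_Ydown hp0 hp1 _ v rfl,
            ENNReal.toReal_ofReal (rho_nonneg_le_one hp0 hp1 _).1]
        · rw [if_neg h]
          have hset : {ω' : Edg n → Bool | v.1.length < n ∧ ω' ∈ Ydown v} = ∅ := by
            ext ω'; simp [h]
          rw [hset]
          simp
    _ = ∑ m ∈ Finset.range (n + 1), ∑ v ∈ Finset.univ.filter (fun v : Vtx n => v.1.length = m),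
          (if v.1.length < n then rho p (n - v.1.length) else 0) :=
        (Finset.sum_fiberwise_of_maps_to
          (fun v _ => Finset.mem_range.mpr (by have := v.2; omega)) _).symm
    _ = ∑ m ∈ Finset.range (n + 1), (2 : ℝ) ^ m * (if m < n then rho p (n - m) else 0) := by
        refine Finset.sum_congr rfl fun m hm => ?_
        rw [Finset.sum_congr rfl (fun v hv => ?_ :
          ∀ v ∈ Finset.univ.filter (fun v : Vtx n => v.1.length = m),
            (if v.1.length < n then rho p (n - v.1.length) else 0)
              = (if m < n then rho p (n - m) else 0)),
          Finset.sum_const, card_len n m (by simp at hm; omega), nsmul_eq_mul]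
        · push_cast
          ring
        · simp only [Finset.mem_filter] at hv
          rw [hv.2]
    _ = ∑ m ∈ Finset.range n, (2 : ℝ) ^ m * rho p (n - m) := by
        rw [Finset.sum_range_succ]
        simp only [lt_self_iff_false, if_false, mul_zero, add_zero]
        refine Finset.sum_congr rfl fun m hm => ?_
        rw [if_pos (Finset.mem_range.mp hm)]
    _ = ∑ k ∈ Finset.Icc 1 n, (2 : ℝ) ^ (n - k) * rho p k := by
        refine Finset.sum_nbij' (fun m => n - m) (fun k => n - k) ?_ ?_ ?_ ?_ ?_
        · intro m hm
          simp only [Finset.mem_range] at hm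
          simp only [Finset.mem_Icc]
          omega
        · intro k hk
          simp only [Finset.mem_Icc] at hk
          simp only [Finset.mem_range]
          omega
        · intro m hm
          simp only [Finset.mem_range] at hm
          omega
        · intro k hk
          simp only [Finset.mem_Icc] at hk
          omega
        · intro m hm
          simp only [Finset.mem_range] at hm
          rw [Nat.sub_sub_self (le_of_lt hm)]
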